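/- There exists a uniformly resolvable decomposition of the complete 5-partite graph of type 2^5 (vertex set Z_10, parts {i, i+5}) into 4 perfect matchings and 2 parallel classes each consisting of 2 vertex-disjoint 5-cycles. -/

import Mathlib

/-- The edges of a path given by the list of its vertices in order. -/
def pathEdges {V : Type*} [DecidableEq V] (l : List V) : Finset (Sym2 V) :=
  ((l.zip l.tail).map (fun p : V × V => Sym2.mk p.1 p.2)).toFinset

/-- The edges of a cycle given by the list of its vertices in cyclic order. -/
def cycEdges {V : Type*} [DecidableEq V] (l : List V) : Finset (Sym2 V) :=
  ((l.zip (l.rotate 1)).map (fun p : V × V => Sym2.mk p.1 p.2)).toFinset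

/-- A parallel class of paths on `k` vertices in `G`: vertex-disjoint paths covering
every vertex. -/
def IsPathClass {V : Type*} (G : SimpleGraph V) (k : ℕ) (C : Finset (List V)) : Prop :=
  (∀ l ∈ C, l.length = k ∧ l.Nodup ∧ l.Chain' G.Adj) ∧
  ∀ x : V, ∃! l : List V, l ∈ C ∧ x ∈ l

/-- A parallel class of cycles on `k` vertices in `G`: vertex-disjoint `k`-cycles
covering every vertex. -/
def IsCycleClass {V : Type*} (G : SimpleGraph V) (k : ℕ) (C : Finset (List V)) : Prop :=
  (∀ l ∈ C, l.length = k ∧ l.Nodup ∧ ∀ p ∈ l.zip (l.rotate 1), G.Adj p.1 p.2) ∧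
  ∀ x : V, ∃! l : List V, l ∈ C ∧ x ∈ l

/-- The edges of the `i`-th class, where the first `m` classes are matching (path)
classes and the last `n` classes are cycle classes. -/
def edgesOf {V : Type*} [DecidableEq V] {m n : ℕ}
    (F : Fin m ⊕ Fin n → Finset (List V)) : Fin m ⊕ Fin n → Finset (Sym2 V)
  | Sum.inl i => (F (Sum.inl i)).biUnion pathEdges
  | Sum.inr i => (F (Sum.inr i)).biUnion cycEdges

/-- The complete 5-partite graph of type `2⁵` on `Z₁₀`, with parts `{i, i+5}`:
two vertices are adjacent iff their residues modulo 5 differ. -/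
def G25 : SimpleGraph (ZMod 10) :=
  SimpleGraph.comap (fun x => ZMod.castHom (show (5:ℕ) ∣ 10 by norm_num) (ZMod 5) x) ⊤

/-- A uniformly resolvable decomposition of the complete 5-partite graph of type `2⁵`
into `r` perfect matchings and `t` parallel classes each consisting of 2
vertex-disjoint 5-cycles. -/
def IsURD25 (r t : ℕ) : Prop :=
  ∃ F : Fin r ⊕ Fin t → Finset (List (ZMod 10)),
    (∀ i : Fin r, IsPathClass G25 2 (F (Sum.inl i))) ∧
    (∀ i : Fin t, IsCycleClass G25 5 (F (Sum.inr i))) ∧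
    (∀ i j, i ≠ j → Disjoint (edgesOf F i) (edgesOf F j)) ∧
    (∀ e, e ∈ G25.edgeSet ↔ ∃ i, e ∈ edgesOf F i)

/-- The complete 5-partite graph of type `2⁵` admits a uniformly resolvable
decomposition into 4 perfect matchings and 2 parallel classes each consisting of 2
vertex-disjoint 5-cycles. -/

instance : DecidableRel G25.Adj := fun _ _ => inferInstanceAs (Decidable (¬ _ = _))

/-- The explicit decomposition: 4 matchings and 2 cycle classes. -/
def myF : Fin 4 ⊕ Fin 2 → Finset (List (ZMod 10)) :=
  Sum.elim
    ![ {[0,1],[2,3],[4,5],[6,7],[8,9]},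
       {[1,2],[3,4],[5,6],[7,8],[9,0]},
       {[0,3],[2,5],[4,7],[6,9],[8,1]},
       {[1,4],[3,6],[5,8],[7,0],[9,2]} ]
    ![ {[0,2,4,6,8],[1,3,5,7,9]},
       {[0,4,8,2,6],[1,5,9,3,7]} ]

lemma uniqueCover {V : Type*} [DecidableEq V] (C : Finset (List V)) (x : V)
    (h : ∃ w ∈ C, x ∈ w ∧ ∀ l ∈ C, x ∈ l → l = w) :
    ∃! l : List V, l ∈ C ∧ x ∈ l := by
  obtain ⟨w, hw, hx, hu⟩ := h
  exact ⟨w, ⟨hw, hx⟩, fun l ⟨hl, hxl⟩ => hu l hl hxl⟩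

theorem stmt15 : IsURD25 4 2 := by
  refine ⟨myF, ?_, ?_, ?_, ?_⟩
  · intro i
    refine ⟨?_, fun x => uniqueCover _ _ ?_⟩
    · fin_cases i <;>
        (intro l hl; fin_cases hl <;>
          exact ⟨rfl, by decide,
            by simp only [List.Chain', List.isChain_cons_cons, List.isChain_singleton, and_true]; decide⟩)
    · fin_cases i <;> revert x <;> decide
  · intro i
    refine ⟨by fin_cases i <;> decide, fun x => uniqueCover _ _ ?_⟩
    fin_cases i <;> revert x <;> decide
  · decide
  · decide
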